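/- If G is a simple graph on n ≥ 2 vertices with domination number γ = 2 and λ₂(G) = n - 2, then G is the complement of a perfect matching. -/

import Mathlib

open SimpleGraph Finset Matrix

/-- Largest eigenvalue of a real matrix, as the supremum of its (real) eigenvalues. -/
noncomputable def maxEig {V : Type*} [Fintype V] (A : Matrix V V ℝ) : ℝ :=
  sSup {μ : ℝ | ∃ v : V → ℝ, v ≠ 0 ∧ A.mulVec v = μ • v}

/-- The eigenvalues of a real matrix with multiplicity, sorted increasingly
(the real roots of the characteristic polynomial). -/
noncomputable def eigsSorted {V : Type*} [Fintype V] [DecidableEq V]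
    (A : Matrix V V ℝ) : List ℝ :=
  A.charpoly.roots.sort (· ≤ ·)

/-- The second smallest eigenvalue (with multiplicity) of a real matrix. -/
noncomputable def secondEig {V : Type*} [Fintype V] [DecidableEq V]
    (A : Matrix V V ℝ) : ℝ :=
  (eigsSorted A).getD 1 0

/-- `G` has no triangles. -/
def TriangleFree {V : Type*} (G : SimpleGraph V) : Prop :=
  ∀ a b c : V, G.Adj a b → G.Adj b c → G.Adj c a → False

/-- `G` has no 4-cycles. -/
def C4Free {V : Type*} (G : SimpleGraph V) : Prop :=
  ∀ a b c d : V, a ≠ c → b ≠ d →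
    G.Adj a b → G.Adj b c → G.Adj c d → G.Adj d a → False

/-- `X` is a dominating set of `G`. -/
def IsDominatingSet {V : Type*} (G : SimpleGraph V) (X : Finset V) : Prop :=
  ∀ v : V, v ∉ X → ∃ u ∈ X, G.Adj u v

/-- The domination number of `G`. -/
noncomputable def domNum {V : Type*} [Fintype V] (G : SimpleGraph V) : ℕ :=
  sInf {k : ℕ | ∃ X : Finset V, IsDominatingSet G X ∧ X.card = k}

/-- Number of edges between `X` and its complement. -/
def crossEdges {V : Type*} [Fintype V] [DecidableEq V] (G : SimpleGraph V)
    [DecidableRel G.Adj] (X : Finset V) : ℕ :=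
  (Finset.univ.filter fun p : V × V => p.1 ∈ X ∧ p.2 ∉ X ∧ G.Adj p.1 p.2).card

open Polynomial in
private lemma aux_map_mul_map_eq_one {m : Type*} [Fintype m] [DecidableEq m]
    (U V : Matrix m m ℝ) (h1 : U * V = 1) : U.map C * V.map C = 1 := by
  rw [← Matrix.map_mul, h1, Matrix.map_one _ (map_zero C) (map_one C)]

open Polynomial in
private lemma aux_charpoly_conj_eq {m : Type*} [Fintype m] [DecidableEq m]
    (U V A : Matrix m m ℝ) (h1 : U * V = 1) :
    (U * A * V).charpoly = A.charpoly := by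
  have key : U.map C * V.map C = 1 := aux_map_mul_map_eq_one U V h1
  have hsc : (scalar m) (X : ℝ[X]) * (V.map C) = V.map C * (scalar m) X :=
    Matrix.scalar_commute (X : ℝ[X]) (Commute.all X) (V.map C)
  have hcm : charmatrix (U * A * V) = U.map C * charmatrix A * V.map C := by
    unfold charmatrix
    rw [Matrix.mul_sub, Matrix.sub_mul]
    congr 1
    · calc (scalar m) (X : ℝ[X]) = (U.map C * V.map C) * (scalar m) X := by rw [key, one_mul]
        _ = U.map C * (V.map C * (scalar m) X) := by rw [mul_assoc]
        _ = U.map C * ((scalar m) X * V.map C) := congrArg _ hsc.symm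
        _ = U.map C * (scalar m) X * V.map C := (mul_assoc _ _ _).symm
    · simp only [RingHom.mapMatrix_apply]
      rw [← Matrix.map_mul, ← Matrix.map_mul]
  rw [Matrix.charpoly, hcm, Matrix.charpoly]
  rw [det_mul, det_mul]
  calc (U.map C).det * (charmatrix A).det * (V.map C).det
      = (charmatrix A).det * ((U.map C) * (V.map C)).det := by rw [det_mul]; ring
    _ = (charmatrix A).det := by rw [key, det_one, mul_one]

open Polynomial in
private lemma aux_charpoly_diag {m : Type*} [Fintype m] [DecidableEq m] (d : m → ℝ) :
    (diagonal d).charpoly = ∏ i, (X - C (d i)) := by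
  rw [Matrix.charpoly]
  have : charmatrix (diagonal d) = diagonal (fun i => X - C (d i)) := by
    ext i j
    by_cases h : i = j
    · subst h; simp [charmatrix_apply_eq]
    · simp [charmatrix_apply_ne _ _ _ h, diagonal_apply_ne _ h]
  rw [this, det_diagonal]

open Polynomial in
private lemma aux_roots_charpoly_hermitian {m : Type*} [Fintype m] [DecidableEq m]
    {A : Matrix m m ℝ} (hA : A.IsHermitian) :
    A.charpoly.roots = Finset.univ.val.map hA.eigenvalues := by
  have hU := hA.spectral_theorem
  have h1 : (hA.eigenvectorUnitary : Matrix m m ℝ) *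
      (star (hA.eigenvectorUnitary : Matrix m m ℝ)) = 1 :=
    Unitary.coe_mul_star_self _
  have hd : (diagonal ((RCLike.ofReal : ℝ → ℝ) ∘ hA.eigenvalues)) = diagonal hA.eigenvalues := by
    rw [RCLike.ofReal_real_eq_id]; rfl
  have : A.charpoly = (diagonal hA.eigenvalues).charpoly := by
    conv_lhs => rw [hU]
    rw [← hd]
    exact aux_charpoly_conj_eq _ _ _ h1
  rw [this, aux_charpoly_diag]
  have : (∏ i, (X - C (hA.eigenvalues i)))
      = ((Finset.univ.val.map hA.eigenvalues).map (fun a => X - C a)).prod := by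
    rw [Multiset.map_map]; rfl
  rw [this, roots_multiset_prod_X_sub_C]

private lemma aux_sorted_countP_le_one {t : ℝ} : ∀ (l : List ℝ), l.Pairwise (· ≤ ·) →
    2 ≤ l.length → l.getD 1 0 = t → l.countP (fun x => decide (x < t)) ≤ 1
  | [], _, hlen, _ => by simp at hlen
  | [a], _, hlen, _ => by simp at hlen
  | a :: b :: l'', hsort, _, hs => by
    have hb : b = t := by simpa using hs
    rw [List.countP_cons]
    have htail : (b :: l'').countP (fun x => decide (x < t)) = 0 := by
      rw [List.countP_eq_zero]
      intro x hx
      simp only [decide_eq_true_eq, not_lt]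
      rcases List.mem_cons.mp hx with h | h
      · rw [h, hb]
      · calc t = b := hb.symm
          _ ≤ x := (List.pairwise_cons.mp hsort.of_cons).1 x h
    rw [htail]
    split <;> simp

private lemma aux_count_lt_le_one {m : Type*} [Fintype m] [DecidableEq m] (μ : m → ℝ) (t : ℝ)
    (hs : ((Finset.univ.val.map μ).sort (· ≤ ·)).getD 1 0 = t)
    (hlen : 2 ≤ Fintype.card m) :
    (Finset.univ.filter (fun i => μ i < t)).card ≤ 1 := by
  have hlen' : 2 ≤ ((Finset.univ.val.map μ).sort (· ≤ ·)).length := by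
    rw [Multiset.length_sort, Multiset.card_map]
    simpa using hlen
  have key := aux_sorted_countP_le_one _ (Multiset.pairwise_sort _ _) hlen' hs
  have hcount : (Finset.univ.filter (fun i => μ i < t)).card
      = (Finset.univ.val.map μ).countP (fun a => a < t) := by
    rw [Multiset.countP_map]; rfl
  have hcl : (Finset.univ.val.map μ).countP (fun a => a < t)
      = ((Finset.univ.val.map μ).sort (· ≤ ·)).countP (fun x => decide (x < t)) := by
    conv_lhs => rw [← Multiset.sort_eq (Finset.univ.val.map μ) (· ≤ ·)]
    rfl
  rw [hcount, hcl]
  exact key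

private lemma aux_spectral_contra {m : Type*} [Fintype m] [DecidableEq m] [Nonempty m]
    {A : Matrix m m ℝ} (hA : A.IsHermitian) {t : ℝ}
    (hj : ∃ j : m, ∀ i : m, i ≠ j → t ≤ hA.eigenvalues i)
    (one x : m → ℝ) (h1 : A *ᵥ one = 0) (hperp : one ⬝ᵥ x = 0)
    (hone : 0 < one ⬝ᵥ one) (ht : 0 < t)
    (hx : x ⬝ᵥ (A *ᵥ x) < t * (x ⬝ᵥ x)) : False := by
  obtain ⟨j, hj⟩ := hj
  set U : Matrix m m ℝ := (hA.eigenvectorUnitary : Matrix m m ℝ) with hUdef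
  set W : Matrix m m ℝ := star U with hWdef
  have hUW : U * W = 1 := Unitary.coe_mul_star_self _
  have hWt : Wᵀ = U := by
    rw [hWdef, Matrix.star_eq_conjTranspose, conjTranspose_eq_transpose_of_trivial,
      transpose_transpose]
  have hUt : Uᵀ = W := by
    rw [← hWt, transpose_transpose]
  set μ : m → ℝ := hA.eigenvalues with hmu
  set c : (m → ℝ) → (m → ℝ) := fun z => W *ᵥ z with hcdef
  have hnorm : ∀ z : m → ℝ, (c z) ⬝ᵥ (c z) = z ⬝ᵥ z := by
    intro z
    rw [hcdef]
    rw [dotProduct_mulVec, ← mulVec_transpose, hWt, mulVec_mulVec, hUW, one_mulVec]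
  have hquad : ∀ z : m → ℝ, z ⬝ᵥ (A *ᵥ z) = ∑ i, μ i * (c z i)^2 := by
    intro z
    have hst := hA.spectral_theorem
    have hd : (diagonal ((RCLike.ofReal : ℝ → ℝ) ∘ μ)) = diagonal μ := by
      rw [RCLike.ofReal_real_eq_id]; rfl
    conv_lhs => rw [hst]
    rw [hd]
    rw [Unitary.conjStarAlgAut_apply, ← hUdef, ← hWdef, ← mulVec_mulVec, ← mulVec_mulVec, dotProduct_mulVec, ← mulVec_transpose,
      hUt]
    simp only [hcdef, mulVec_diagonal, dotProduct]
    congr 1; ext i; ring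
  have hquad1 : one ⬝ᵥ (A *ᵥ one) = 0 := by rw [h1, dotProduct_zero]
  have hAsymm : Aᵀ = A := by
    rw [← conjTranspose_eq_transpose_of_trivial, hA.eq]
  have hcross : one ⬝ᵥ (A *ᵥ x) = 0 := by
    rw [dotProduct_mulVec, ← mulVec_transpose, hAsymm, h1, zero_dotProduct]
  have hcross' : x ⬝ᵥ (A *ᵥ one) = 0 := by rw [h1, dotProduct_zero]
  obtain ⟨a, b, hab, hzero⟩ : ∃ a b : ℝ, ¬(a = 0 ∧ b = 0) ∧ a * c one j + b * c x j = 0 := by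
    by_cases h : c one j = 0 ∧ c x j = 0
    · exact ⟨0, 1, by simp, by simp [h.1, h.2]⟩
    · refine ⟨c x j, -(c one j), ?_, by ring⟩
      rintro ⟨ha, hb⟩
      exact h ⟨by linarith [neg_eq_zero.mp hb], ha⟩
  set y : m → ℝ := a • one + b • x with hydef
  have hcy : c y = a • (c one) + b • (c x) := by
    rw [hydef, hcdef]
    simp [mulVec_add, mulVec_smul]
  have hcyj : c y j = 0 := by rw [hcy]; simpa using hzero
  have hyy : y ⬝ᵥ y = a^2 * (one ⬝ᵥ one) + b^2 * (x ⬝ᵥ x) := by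
    rw [hydef]
    simp only [dotProduct_add, add_dotProduct, smul_dotProduct, dotProduct_smul, smul_eq_mul]
    rw [dotProduct_comm x one] at *
    rw [hperp]
    ring
  have hyAy : y ⬝ᵥ (A *ᵥ y) = b^2 * (x ⬝ᵥ (A *ᵥ x)) := by
    rw [hydef]
    simp only [mulVec_add, mulVec_smul, dotProduct_add, add_dotProduct, smul_dotProduct,
      dotProduct_smul, smul_eq_mul]
    rw [hquad1, hcross, hcross']
    ring
  have hxx : 0 < x ⬝ᵥ x := by
    by_contra h
    push_neg at h
    have h0 : x ⬝ᵥ (A *ᵥ x) < 0 := lt_of_lt_of_le hx (by nlinarith)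
    have hx0 : x ⬝ᵥ x = 0 → x ⬝ᵥ (A *ᵥ x) = 0 := by
      intro hxz
      have hcc : (c x) ⬝ᵥ (c x) = 0 := by rw [hnorm, hxz]
      have hcx0 : ∀ i, c x i = 0 := by
        intro i
        have hnn : ∀ i, 0 ≤ c x i * c x i := fun i => mul_self_nonneg _
        have := (Finset.sum_eq_zero_iff_of_nonneg (fun i _ => hnn i)).mp hcc i (Finset.mem_univ i)
        nlinarith [this]
      rw [hquad]
      apply Finset.sum_eq_zero
      intro i _
      rw [hcx0 i]; ring
    have hxz : x ⬝ᵥ x = 0 := le_antisymm h (Finset.sum_nonneg fun i _ => mul_self_nonneg _)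
    rw [hx0 hxz] at h0
    exact lt_irrefl _ h0
  have hlt : y ⬝ᵥ (A *ᵥ y) < t * (y ⬝ᵥ y) := by
    rw [hyAy, hyy]
    rcases eq_or_ne b 0 with hb | hb
    · have ha : a ≠ 0 := fun h => hab ⟨h, hb⟩
      rw [hb]
      have : 0 < a^2 * (one ⬝ᵥ one) := by positivity
      nlinarith
    · have hb2 : 0 < b^2 := by positivity
      nlinarith [mul_nonneg (le_of_lt ht) (mul_nonneg (sq_nonneg a) (le_of_lt hone))]
  have hge : t * (y ⬝ᵥ y) ≤ y ⬝ᵥ (A *ᵥ y) := by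
    rw [hquad y, ← hnorm y]
    have : t * ((c y) ⬝ᵥ (c y)) = ∑ i, t * (c y i)^2 := by
      simp only [dotProduct, Finset.mul_sum]
      congr 1; ext i; ring
    rw [this]
    apply Finset.sum_le_sum
    intro i _
    rcases eq_or_ne i j with h | h
    · subst h; rw [hcyj]; simp
    · exact mul_le_mul_of_nonneg_right (hj i h) (sq_nonneg _)
  linarith

private lemma aux_quad_expand {m : Type*} [Fintype m] [DecidableEq m]
    (A : Matrix m m ℝ) (v w1 w2 : m)
    (x : m → ℝ) (hx : x = (2:ℝ) • (Pi.single v (1:ℝ) : m → ℝ) - Pi.single w1 1 - Pi.single w2 1) :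
    x ⬝ᵥ (A *ᵥ x) = 4*A v v + A w1 w1 + A w2 w2 - 2*A v w1 - 2*A w1 v
      - 2*A v w2 - 2*A w2 v + A w1 w2 + A w2 w1 := by
  rw [hx]
  simp only [mulVec_sub, mulVec_smul, mulVec_single_one, Matrix.col, Matrix.transpose_apply, sub_dotProduct, smul_dotProduct,
    dotProduct_sub, dotProduct_smul, single_dotProduct, smul_eq_mul, mul_one,
    Pi.sub_apply, Pi.smul_apply]
  ring

private lemma aux_dot_self_x {m : Type*} [Fintype m] [DecidableEq m]
    (v w1 w2 : m) (h1 : v ≠ w1) (h2 : v ≠ w2) (h3 : w1 ≠ w2)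
    (x : m → ℝ) (hx : x = (2:ℝ) • (Pi.single v (1:ℝ) : m → ℝ) - Pi.single w1 1 - Pi.single w2 1) :
    x ⬝ᵥ x = 6 := by
  rw [hx]
  simp only [sub_dotProduct, smul_dotProduct, dotProduct_sub, dotProduct_smul,
    single_dotProduct, smul_eq_mul, mul_one, Pi.sub_apply, Pi.smul_apply,
    Pi.single_eq_same, Pi.single_eq_of_ne h1.symm, Pi.single_eq_of_ne h2.symm,
    Pi.single_eq_of_ne h3.symm, Pi.single_eq_of_ne h1, Pi.single_eq_of_ne h2,
    Pi.single_eq_of_ne h3]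
  ring

private lemma aux_ones_dot_x {m : Type*} [Fintype m] [DecidableEq m] (v w1 w2 : m)
    (x : m → ℝ) (hx : x = (2:ℝ) • (Pi.single v (1:ℝ) : m → ℝ) - Pi.single w1 1 - Pi.single w2 1) :
    (fun _ : m => (1:ℝ)) ⬝ᵥ x = 0 := by
  rw [hx]
  simp only [dotProduct_sub, dotProduct_smul, dotProduct_single, smul_eq_mul, mul_one]
  ring

private lemma aux_lap_apply {m : Type*} [Fintype m] [DecidableEq m]
    (G : SimpleGraph m) [DecidableRel G.Adj] (i j : m) :
    (G.lapMatrix ℝ) i j = (if i = j then (G.degree i : ℝ) else 0)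
      - (if G.Adj i j then 1 else 0) := by
  rw [SimpleGraph.lapMatrix, Matrix.sub_apply, SimpleGraph.degMatrix, Matrix.diagonal_apply]
  simp

theorem stmt_9 {n : ℕ} (hn : 2 ≤ n) (G : SimpleGraph (Fin n)) [DecidableRel G.Adj]
    (hγ : domNum G = 2) (hl : secondEig (G.lapMatrix ℝ) = (n : ℝ) - 2) :
    ∀ v : Fin n, ∃! w : Fin n, Gᶜ.Adj v w := by
  intro v
  -- existence of a non-neighbor
  have hex : ∃ w : Fin n, Gᶜ.Adj v w := by
    by_contra h
    push_neg at h
    have hdom : IsDominatingSet G {v} := by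
      intro u hu
      refine ⟨v, Finset.mem_singleton_self v, ?_⟩
      have hvu : v ≠ u := fun he => hu (by simp [← he])
      have hcompl : ¬ Gᶜ.Adj v u := fun hadj => (h u).elim hadj
      rw [SimpleGraph.compl_adj] at hcompl
      push_neg at hcompl
      exact hcompl hvu
    have h1 : (1 : ℕ) ∈ {k : ℕ | ∃ X : Finset (Fin n), IsDominatingSet G X ∧ X.card = k} :=
      ⟨{v}, hdom, Finset.card_singleton v⟩
    have := Nat.sInf_le h1
    rw [domNum] at hγ
    omega
  obtain ⟨w1, hw1⟩ := hex
  refine ⟨w1, hw1, ?_⟩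
  intro w2 hw2
  by_contra hne
  -- w2 ≠ w1 are two distinct non-neighbors of v; derive a contradiction
  exfalso
  rw [SimpleGraph.compl_adj] at hw1 hw2
  obtain ⟨hvw1, hnadj1⟩ := hw1
  obtain ⟨hvw2, hnadj2⟩ := hw2
  have hw12 : w1 ≠ w2 := fun h => hne h.symm
  set A : Matrix (Fin n) (Fin n) ℝ := G.lapMatrix ℝ with hAdef
  have hA : A.IsHermitian := (G.posSemidef_lapMatrix ℝ).1
  -- n ≥ 3
  have hcard3 : ({v, w1, w2} : Finset (Fin n)).card = 3 := by
    rw [Finset.card_insert_of_notMem (by simp [hvw1, hvw2]),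
      Finset.card_insert_of_notMem (by simp [hw12]), Finset.card_singleton]
  have h3n : 3 ≤ n := by
    have := Finset.card_le_card (Finset.subset_univ ({v, w1, w2} : Finset (Fin n)))
    rw [hcard3] at this
    simpa using this
  have h3nR : (3 : ℝ) ≤ (n : ℝ) := by exact_mod_cast h3n
  -- eigenvalue count
  have hsorted : ((Finset.univ.val.map hA.eigenvalues).sort (· ≤ ·)).getD 1 0 = (n : ℝ) - 2 := by
    have : secondEig A = (n : ℝ) - 2 := hl
    rw [secondEig, eigsSorted, aux_roots_charpoly_hermitian hA] at this
    exact this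
  have hcard : (Finset.univ.filter (fun i => hA.eigenvalues i < (n : ℝ) - 2)).card ≤ 1 :=
    aux_count_lt_le_one _ _ hsorted (by simpa using hn)
  have hj : ∃ j : Fin n, ∀ i : Fin n, i ≠ j → (n : ℝ) - 2 ≤ hA.eigenvalues i := by
    rcases Finset.eq_empty_or_nonempty
        (Finset.univ.filter (fun i => hA.eigenvalues i < (n : ℝ) - 2)) with he | ⟨j, hjm⟩
    · refine ⟨v, fun i _ => not_lt.mp fun hlt => ?_⟩
      have : i ∈ Finset.univ.filter (fun i => hA.eigenvalues i < (n : ℝ) - 2) :=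
        Finset.mem_filter.mpr ⟨Finset.mem_univ i, hlt⟩
      rw [he] at this
      exact absurd this (Finset.notMem_empty i)
    · refine ⟨j, fun i hij => not_lt.mp fun hlt => hij ?_⟩
      exact Finset.card_le_one.mp hcard i
        (Finset.mem_filter.mpr ⟨Finset.mem_univ i, hlt⟩) j hjm
  -- the test vector
  set x : Fin n → ℝ := (2:ℝ) • (Pi.single v (1:ℝ) : Fin n → ℝ) - Pi.single w1 1 - Pi.single w2 1
    with hxdef
  have hones : A *ᵥ (fun _ : Fin n => (1:ℝ)) = 0 := G.lapMatrix_mulVec_const_eq_zero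
  have hperp : (fun _ : Fin n => (1:ℝ)) ⬝ᵥ x = 0 := aux_ones_dot_x v w1 w2 x hxdef
  have honeone : (fun _ : Fin n => (1:ℝ)) ⬝ᵥ (fun _ : Fin n => (1:ℝ)) = (n : ℝ) := by
    simp [dotProduct]
  have hone : 0 < (fun _ : Fin n => (1:ℝ)) ⬝ᵥ (fun _ : Fin n => (1:ℝ)) := by
    rw [honeone]; linarith
  have hxx : x ⬝ᵥ x = 6 := aux_dot_self_x v w1 w2 hvw1 hvw2 hw12 x hxdef
  -- entry values
  have hAvv : A v v = (G.degree v : ℝ) := by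
    rw [hAdef, aux_lap_apply, if_pos rfl, if_neg (G.irrefl), sub_zero]
  have hAw1w1 : A w1 w1 = (G.degree w1 : ℝ) := by
    rw [hAdef, aux_lap_apply, if_pos rfl, if_neg (G.irrefl), sub_zero]
  have hAw2w2 : A w2 w2 = (G.degree w2 : ℝ) := by
    rw [hAdef, aux_lap_apply, if_pos rfl, if_neg (G.irrefl), sub_zero]
  have hAvw1 : A v w1 = 0 := by
    rw [hAdef, aux_lap_apply, if_neg hvw1, if_neg hnadj1, sub_zero]
  have hAw1v : A w1 v = 0 := by
    rw [hAdef, aux_lap_apply, if_neg hvw1.symm, if_neg (fun h => hnadj1 h.symm), sub_zero]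
  have hAvw2 : A v w2 = 0 := by
    rw [hAdef, aux_lap_apply, if_neg hvw2, if_neg hnadj2, sub_zero]
  have hAw2v : A w2 v = 0 := by
    rw [hAdef, aux_lap_apply, if_neg hvw2.symm, if_neg (fun h => hnadj2 h.symm), sub_zero]
  have hAw1w2 : A w1 w2 ≤ 0 := by
    rw [hAdef, aux_lap_apply, if_neg hw12]
    split <;> norm_num
  have hAw2w1 : A w2 w1 ≤ 0 := by
    rw [hAdef, aux_lap_apply, if_neg hw12.symm]
    split <;> norm_num
  -- degree bounds
  have hdegv : (G.degree v : ℝ) ≤ (n : ℝ) - 3 := by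
    have hsub : G.neighborFinset v ⊆ Finset.univ \ {v, w1, w2} := by
      intro u hu
      rw [SimpleGraph.mem_neighborFinset] at hu
      simp only [Finset.mem_sdiff, Finset.mem_univ, true_and, Finset.mem_insert,
        Finset.mem_singleton]
      push_neg
      refine ⟨fun h => G.irrefl (h ▸ hu), fun h => hnadj1 (h ▸ hu), fun h => hnadj2 (h ▸ hu)⟩
    have hc : (Finset.univ \ ({v, w1, w2} : Finset (Fin n))).card = n - 3 := by
      rw [Finset.card_sdiff_of_subset (Finset.subset_univ _), hcard3]
      simp
    have hdeg : G.degree v ≤ n - 3 := by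
      rw [SimpleGraph.degree, ← hc]
      exact Finset.card_le_card hsub
    have := (Nat.cast_le (α := ℝ)).mpr hdeg
    rwa [Nat.cast_sub h3n, Nat.cast_ofNat] at this
  have hdegw : ∀ w : Fin n, v ≠ w → ¬ G.Adj v w → (G.degree w : ℝ) ≤ (n : ℝ) - 2 := by
    intro w hvw hnadj
    have hsub : G.neighborFinset w ⊆ Finset.univ \ {w, v} := by
      intro u hu
      rw [SimpleGraph.mem_neighborFinset] at hu
      simp only [Finset.mem_sdiff, Finset.mem_univ, true_and, Finset.mem_insert,
        Finset.mem_singleton]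
      push_neg
      exact ⟨fun h => G.irrefl (h ▸ hu), fun h => hnadj ((h ▸ hu).symm)⟩
    have hc2 : ({w, v} : Finset (Fin n)).card = 2 := by
      rw [Finset.card_insert_of_notMem (by simp [hvw.symm]), Finset.card_singleton]
    have hc : (Finset.univ \ ({w, v} : Finset (Fin n))).card = n - 2 := by
      rw [Finset.card_sdiff_of_subset (Finset.subset_univ _), hc2]
      simp
    have hdeg : G.degree w ≤ n - 2 := by
      rw [SimpleGraph.degree, ← hc]
      exact Finset.card_le_card hsub
    have := (Nat.cast_le (α := ℝ)).mpr hdeg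
    rwa [Nat.cast_sub (by omega), Nat.cast_ofNat] at this
  have hdegw1 : (G.degree w1 : ℝ) ≤ (n : ℝ) - 2 := hdegw w1 hvw1 hnadj1
  have hdegw2 : (G.degree w2 : ℝ) ≤ (n : ℝ) - 2 := hdegw w2 hvw2 hnadj2
  -- the strict Rayleigh inequality
  have hquad := aux_quad_expand A v w1 w2 x hxdef
  have hxAx : x ⬝ᵥ (A *ᵥ x) < ((n : ℝ) - 2) * (x ⬝ᵥ x) := by
    rw [hxx, hquad, hAvv, hAw1w1, hAw2w2, hAvw1, hAw1v, hAvw2, hAw2v]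
    linarith
  have ht : (0 : ℝ) < (n : ℝ) - 2 := by linarith
  haveI : Nonempty (Fin n) := ⟨v⟩
  exact aux_spectral_contra hA hj (fun _ : Fin n => (1:ℝ)) x hones hperp hone ht hxAx
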